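/- Given η ∈ ℝ, define g_η(ε) = Σ_{l=1}^∞ e^{−4^l ε} 2^{ηl} for ε ∈ (0,1]. Then there exists a constant C = C(η) > 1 such that for all ε ∈ (0,1]: if η < 0 then C^{−1} ≤ g_η(ε) ≤ C; if η = 0 then C^{−1} log(ε^{−1}+1) ≤ g_η(ε) ≤ C log(ε^{−1}+1); and if η > 0 then C^{−1} ε^{−η/2} ≤ g_η(ε) ≤ C ε^{−η/2}. -/

import Mathlib

open MeasureTheory ProbabilityTheory Filter Finset Real
open scoped ENNReal

noncomputable section

/-- Distance from a real number `x` to the nearest integer: the norm of its image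
on the torus `𝕋 = ℝ/ℤ`. -/
def torusNorm (x : ℝ) : ℝ := ‖(x : UnitAddCircle)‖

/-- The set of couplings of two Borel measures on the torus. -/
def couplings (ν₀ ν₁ : Measure UnitAddCircle) : Set (Measure (UnitAddCircle × UnitAddCircle)) :=
  {γ | γ.map Prod.fst = ν₀ ∧ γ.map Prod.snd = ν₁}

/-- The `L^p`-Wasserstein distance between two Borel measures on the torus. -/
def wassersteinDist (p : ℝ) (ν₀ ν₁ : Measure UnitAddCircle) : ℝ :=
  sInf ((fun γ => (∫ z, dist z.1 z.2 ^ p ∂γ) ^ (1 / p)) '' couplings ν₀ ν₁)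

/-- The empirical measure `μ_n = (1/n) ∑_{j=1}^n δ_{{S_j α}}` on the torus,
for a given path `S : ℕ → ℤ` of the random walk. -/
def empiricalMeasure (α : ℝ) (S : ℕ → ℤ) (n : ℕ) : Measure UnitAddCircle :=
  (n : ℝ≥0∞)⁻¹ • ∑ j ∈ Finset.range n, Measure.dirac (((S (j + 1) : ℝ) * α : ℝ) : UnitAddCircle)

/-- The expected `L^p`-Wasserstein distance `E[W_p(μ_n, μ)]` between the empirical measure
of the random walk `S_j = X_1 + ⋯ + X_j` (mod 1, rotated by `α`) and the uniform
distribution `μ` on the torus. -/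
def expWassersteinEmp {Ω : Type*} [MeasurableSpace Ω] (P : Measure Ω) (X : ℕ → Ω → ℤ)
    (α : ℝ) (p : ℝ) (n : ℕ) : ℝ :=
  ∫ ω, wassersteinDist p (empiricalMeasure α (fun j => ∑ i ∈ Finset.range j, X i ω) n) volume ∂P

/-- The function `g_η(ε) = ∑_{l=1}^∞ e^{-4^l ε} 2^{ηl}`. -/
def gFun (η : ℝ) (ε : ℝ) : ℝ :=
  ∑' l : ℕ, Real.exp (-(4 : ℝ) ^ (l + 1) * ε) * (2 : ℝ) ^ (η * ((l : ℝ) + 1))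

/-- Lemma 4.2 of the paper: two-sided asymptotics of
`g_η(ε) = ∑_{l≥1} e^{-4^l ε} 2^{ηl}` on `(0, 1]`. -/
lemma gFun_term_eq (η ε : ℝ) (l : ℕ) :
    Real.exp (-(4 : ℝ) ^ (l + 1) * ε) * (2 : ℝ) ^ (η * ((l : ℝ) + 1))
      = Real.exp (-(4 : ℝ) ^ (l + 1) * ε) * ((2:ℝ)^η)^(l+1) := by
  congr 1
  rw [Real.rpow_mul (by norm_num : (0:ℝ) ≤ 2)]
  rw [show ((l:ℝ)+1) = ((l+1 : ℕ) : ℝ) by push_cast; ring, Real.rpow_natCast]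

lemma gFun_eq (η ε : ℝ) :
    gFun η ε = ∑' l : ℕ, Real.exp (-(4 : ℝ) ^ (l + 1) * ε) * ((2:ℝ)^η)^(l+1) := by
  unfold gFun; congr 1; funext l; exact gFun_term_eq η ε l

lemma m_facts (ε : ℝ) (hε : 0 < ε) (hε1 : ε ≤ 1) :
    ∃ m : ℕ, (4:ℝ)^m * ε ≤ 1 ∧ 1 < (4:ℝ)^(m+1) * ε ∧
      (m:ℝ) * Real.log 4 ≤ Real.log ε⁻¹ ∧ Real.log ε⁻¹ < ((m:ℝ)+1) * Real.log 4 ∧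
      (4:ℝ)^m ≤ ε⁻¹ ∧ ε⁻¹ < (4:ℝ)^(m+1) := by
  have hinv : (1:ℝ) ≤ ε⁻¹ := (one_le_inv_iff₀).2 ⟨hε, hε1⟩
  have hL : 0 ≤ Real.log ε⁻¹ := Real.log_nonneg hinv
  have hlog4 : 0 < Real.log 4 := Real.log_pos (by norm_num)
  set L := Real.log ε⁻¹ with hLdef
  refine ⟨Nat.floor (L / Real.log 4), ?_, ?_, ?_, ?_, ?_, ?_⟩
  all_goals {
    set m := Nat.floor (L / Real.log 4) with hm
    have h1 : (m:ℝ) * Real.log 4 ≤ L := by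
      have := Nat.floor_le (by positivity : 0 ≤ L / Real.log 4)
      rw [← hm] at this
      calc (m:ℝ) * Real.log 4 ≤ (L / Real.log 4) * Real.log 4 :=
        mul_le_mul_of_nonneg_right this hlog4.le
      _ = L := by field_simp
    have h2 : L < ((m:ℝ)+1) * Real.log 4 := by
      have := Nat.lt_floor_add_one (L / Real.log 4)
      rw [← hm] at this
      calc L = (L / Real.log 4) * Real.log 4 := by field_simp
      _ < ((m:ℝ)+1) * Real.log 4 := mul_lt_mul_of_pos_right this hlog4
    have hexp : ∀ k : ℕ, (4:ℝ)^k = Real.exp ((k:ℝ) * Real.log 4) := by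
      intro k
      rw [Real.exp_nat_mul, Real.exp_log (by norm_num : (0:ℝ) < 4)]
    have hexpL : Real.exp L = ε⁻¹ := Real.exp_log (by positivity)
    have hb1 : (4:ℝ)^m ≤ ε⁻¹ := by
      rw [hexp, ← hexpL]; exact Real.exp_le_exp.2 h1
    have hb2 : ε⁻¹ < (4:ℝ)^(m+1) := by
      rw [hexp, ← hexpL]; push_cast; exact Real.exp_lt_exp.2 (by push_cast at h2 ⊢; linarith)
    first
    | (calc (4:ℝ)^m * ε ≤ ε⁻¹ * ε := mul_le_mul_of_nonneg_right hb1 hε.le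
        _ = 1 := inv_mul_cancel₀ hε.ne')
    | (calc (1:ℝ) = ε⁻¹ * ε := (inv_mul_cancel₀ hε.ne').symm
        _ < (4:ℝ)^(m+1) * ε := mul_lt_mul_of_pos_right hb2 hε)
    | exact h1
    | exact h2
    | exact hb1
    | exact hb2 }


lemma summable_aux (ε c : ℝ) (hε : 0 < ε) (hc : 0 ≤ c) :
    Summable (fun l : ℕ => Real.exp (-(4:ℝ)^l * ε) * c^l) := by
  apply summable_of_ratio_norm_eventually_le (r := 1/2) (by norm_num)
  have h4 : Tendsto (fun l : ℕ => (4:ℝ)^l) atTop atTop :=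
    tendsto_pow_atTop_atTop_of_one_lt (by norm_num)
  have h0 : Tendsto (fun l : ℕ => c * Real.exp (-3 * (4:ℝ)^l * ε)) atTop (nhds 0) := by
    have hb : Tendsto (fun l : ℕ => -3 * (4:ℝ)^l * ε) atTop atBot := by
      have h1 : Tendsto (fun l : ℕ => (3*ε) * (4:ℝ)^l) atTop atTop :=
        h4.const_mul_atTop (by positivity)
      have := tendsto_neg_atTop_atBot.comp h1
      rw [show ((fun x : ℝ => -x) ∘ (fun l : ℕ => 3*ε*(4:ℝ)^l)) = (fun l : ℕ => -3 * (4:ℝ)^l * ε) from by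
        funext l; simp; ring] at this
      exact this
    simpa using (Real.tendsto_exp_atBot.comp hb).const_mul c
  have hev : ∀ᶠ l : ℕ in atTop, c * Real.exp (-3 * (4:ℝ)^l * ε) ≤ 1/2 :=
    h0.eventually (eventually_le_nhds (by norm_num : (0:ℝ) < 1/2))
  filter_upwards [hev] with l hl
  have e1 : Real.exp (-(4:ℝ)^(l+1) * ε) = Real.exp (-(4:ℝ)^l * ε) * Real.exp (-3 * (4:ℝ)^l * ε) := by
    rw [← Real.exp_add]; ring_nf
  rw [Real.norm_eq_abs, Real.norm_eq_abs, abs_of_nonneg (by positivity), abs_of_nonneg (by positivity),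
    e1, pow_succ]
  calc Real.exp (-(4:ℝ)^l * ε) * Real.exp (-3 * (4:ℝ)^l * ε) * (c^l * c)
      = (c * Real.exp (-3 * (4:ℝ)^l * ε)) * (Real.exp (-(4:ℝ)^l * ε) * c^l) := by ring
    _ ≤ (1/2) * (Real.exp (-(4:ℝ)^l * ε) * c^l) :=
        mul_le_mul_of_nonneg_right hl (by positivity)

lemma summable_aux' (ε c : ℝ) (hε : 0 < ε) (hc : 0 ≤ c) :
    Summable (fun l : ℕ => Real.exp (-(4:ℝ)^(l+1) * ε) * c^(l+1)) := by
  exact (summable_nat_add_iff 1).2 (summable_aux ε c hε hc)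

lemma gFun_summable (η ε : ℝ) (hε : 0 < ε) :
    Summable (fun l : ℕ => Real.exp (-(4:ℝ)^(l+1) * ε) * ((2:ℝ)^η)^(l+1)) :=
  summable_aux' ε _ hε (Real.rpow_pos_of_pos (by norm_num) η).le

set_option maxHeartbeats 1000000 in
lemma case_neg (η : ℝ) (hη : η < 0) :
    ∃ C : ℝ, 1 < C ∧ ∀ ε : ℝ, 0 < ε → ε ≤ 1 → C⁻¹ ≤ gFun η ε ∧ gFun η ε ≤ C := by
  set q := (2:ℝ)^η with hqdef
  have hq0 : 0 < q := Real.rpow_pos_of_pos (by norm_num) η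
  have hq1 : q < 1 := Real.rpow_lt_one_of_one_lt_of_neg (by norm_num) hη
  have h1q : 0 < 1 - q := by linarith
  refine ⟨(1-q)⁻¹ + Real.exp 4 * q⁻¹ + 1, ?_, ?_⟩
  · have : 0 < (1-q)⁻¹ := inv_pos.2 h1q
    have : 0 < Real.exp 4 * q⁻¹ := by positivity
    linarith
  intro ε hε hε1
  have hsum := gFun_summable η ε hε
  rw [gFun_eq]
  constructor
  · -- lower bound via first term
    have h0 : Real.exp (-(4:ℝ)^(0+1) * ε) * q^(0+1) ≤ ∑' l : ℕ, Real.exp (-(4:ℝ)^(l+1) * ε) * q^(l+1) :=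
      Summable.le_tsum hsum 0 (fun j _ => by positivity)
    have hterm : Real.exp (-4) * q ≤ Real.exp (-(4:ℝ)^(0+1) * ε) * q^(0+1) := by
      simp only [pow_one, zero_add]
      apply mul_le_mul_of_nonneg_right _ hq0.le
      exact Real.exp_le_exp.2 (by nlinarith)
    have hCinv : ((1-q)⁻¹ + Real.exp 4 * q⁻¹ + 1)⁻¹ ≤ Real.exp (-4) * q := by
      rw [Real.exp_neg]
      rw [show (Real.exp 4)⁻¹ * q = (Real.exp 4 * q⁻¹)⁻¹ by rw [mul_inv, inv_inv]]
      apply inv_anti₀ (by positivity)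
      have : 0 < (1-q)⁻¹ := inv_pos.2 h1q
      linarith
    linarith
  · -- upper bound by geometric series
    calc ∑' l : ℕ, Real.exp (-(4:ℝ)^(l+1) * ε) * q^(l+1)
        ≤ ∑' l : ℕ, q^l := by
          apply Summable.tsum_le_tsum _ hsum (summable_geometric_of_lt_one hq0.le hq1)
          intro l
          calc Real.exp (-(4:ℝ)^(l+1) * ε) * q^(l+1)
              ≤ 1 * q^(l+1) := by
                apply mul_le_mul_of_nonneg_right _ (by positivity)
                exact Real.exp_le_one_iff.2 (by nlinarith [pow_pos (show (0:ℝ)<4 by norm_num) (l+1)])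
            _ = q^l * q := by ring
            _ ≤ q^l * 1 := by nlinarith [pow_pos hq0 l]
            _ = q^l := by ring
      _ = (1-q)⁻¹ := tsum_geometric_of_lt_one hq0.le hq1
      _ ≤ (1-q)⁻¹ + Real.exp 4 * q⁻¹ + 1 := by
          have : 0 < Real.exp 4 * q⁻¹ := by positivity
          linarith

set_option maxHeartbeats 1000000 in
lemma case_pos (η : ℝ) (hη : 0 < η) :
    ∃ C : ℝ, 1 < C ∧ ∀ ε : ℝ, 0 < ε → ε ≤ 1 →
      C⁻¹ * ε ^ (-η / 2) ≤ gFun η ε ∧ gFun η ε ≤ C * ε ^ (-η / 2) := by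
  set q := (2:ℝ)^η with hqdef
  have hq0 : 0 < q := Real.rpow_pos_of_pos (by norm_num) η
  have hq1 : 1 < q := Real.one_lt_rpow_iff_of_pos (by norm_num) |>.2 (Or.inl ⟨by norm_num, hη⟩)
  have hq' : 0 < q - 1 := by linarith
  clear_value q
  -- (4^k)^(η/2) = q^k
  have h24 : (2:ℝ)^(2:ℝ) = 4 := by norm_num
  have h4s : (4:ℝ)^(η/2) = q := by
    rw [← h24, ← Real.rpow_mul (by norm_num : (0:ℝ) ≤ 2)]
    rw [hqdef]; congr 1; ring
  have hpow : ∀ k : ℕ, ((4:ℝ)^k)^(η/2) = q^k := by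
    intro k
    rw [← Real.rpow_natCast (4:ℝ) k, ← Real.rpow_mul (by norm_num : (0:ℝ) ≤ 4),
      mul_comm, Real.rpow_mul (by norm_num : (0:ℝ) ≤ 4), h4s, Real.rpow_natCast]
  set Kf : ℕ → ℝ := fun k => Real.exp (-(4:ℝ)^k * 1) * q^k with hKf
  have hKsum : Summable Kf := summable_aux 1 q one_pos hq0.le
  set K := ∑' k, Kf k with hK
  have hK0 : 0 ≤ K := tsum_nonneg (fun k => by positivity)
  clear_value Kf K
  refine ⟨q/(q-1) + q*K + Real.exp 4, ?_, ?_⟩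
  · have : 0 < q/(q-1) := by positivity
    have h4 : 1 < Real.exp 4 := by
      rw [show (1:ℝ) = Real.exp 0 from (Real.exp_zero).symm]; exact Real.exp_lt_exp.2 (by norm_num)
    nlinarith [mul_nonneg hq0.le hK0]
  intro ε hε hε1
  obtain ⟨m, hm1, hm2, _, _, hm5, hm6⟩ := m_facts ε hε hε1
  set C := q/(q-1) + q*K + Real.exp 4 with hC
  have hCpos : 0 < C := by
    rw [hC]
    have : 0 < q/(q-1) := by positivity
    have := Real.exp_pos (4:ℝ)
    nlinarith [mul_nonneg hq0.le hK0]
  set e := (ε⁻¹)^(η/2) with he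
  have he0 : 0 < e := Real.rpow_pos_of_pos (by positivity) _
  have hED : ε ^ (-η / 2) = e := by
    rw [he, Real.inv_rpow hε.le, ← Real.rpow_neg hε.le]
    congr 1; ring
  -- q^m ≤ e, e ≤ q^(m+1)
  have hqm : q^m ≤ e := by
    rw [← hpow m, he]
    exact Real.rpow_le_rpow (by positivity) hm5 (by positivity)
  have hqm1 : e ≤ q^(m+1) := by
    rw [← hpow (m+1), he]
    exact Real.rpow_le_rpow (by positivity) hm6.le (by positivity)
  set f : ℕ → ℝ := fun l => Real.exp (-(4:ℝ)^(l+1) * ε) * q^(l+1) with hf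
  have hsum : Summable f := by rw [hf, hqdef]; exact gFun_summable η ε hε
  have hgf : gFun η ε = ∑' l, f l := by rw [hf, hqdef]; exact gFun_eq η ε
  clear_value C e f
  rw [hgf, hED]
  constructor
  · -- lower bound: term at l = m
    have hle : f m ≤ ∑' l, f l :=
      Summable.le_tsum hsum m (fun j _ => by rw [hf]; positivity)
    have hterm : Real.exp (-4) * e ≤ f m := by
      rw [hf]
      have h1 : Real.exp (-4) ≤ Real.exp (-(4:ℝ)^(m+1) * ε) := by
        apply Real.exp_le_exp.2
        have : (4:ℝ)^(m+1) * ε ≤ 4 := by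
          rw [pow_succ, mul_comm ((4:ℝ)^m) 4, mul_assoc]
          nlinarith
        linarith
      calc Real.exp (-4) * e ≤ Real.exp (-4) * q^(m+1) :=
            mul_le_mul_of_nonneg_left hqm1 (Real.exp_pos _).le
        _ ≤ Real.exp (-(4:ℝ)^(m+1) * ε) * q^(m+1) :=
            mul_le_mul_of_nonneg_right h1 (by positivity)
    have hCinv : C⁻¹ ≤ Real.exp (-4) := by
      rw [Real.exp_neg]
      apply inv_anti₀ (Real.exp_pos _)
      rw [hC]
      have : 0 < q/(q-1) := by positivity
      nlinarith [mul_nonneg hq0.le hK0]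
    calc C⁻¹ * e ≤ Real.exp (-4) * e := mul_le_mul_of_nonneg_right hCinv he0.le
      _ ≤ f m := hterm
      _ ≤ ∑' l, f l := hle
  · -- upper bound: split at m
    have hsplit := Summable.sum_add_tsum_nat_add m hsum
    rw [← hsplit]
    have hhead : ∑ l ∈ Finset.range m, f l ≤ q/(q-1) * e := by
      have h1 : ∑ l ∈ Finset.range m, f l ≤ ∑ l ∈ Finset.range m, q^l * q := by
        apply Finset.sum_le_sum
        intro l _
        rw [hf]
        calc Real.exp (-(4:ℝ)^(l+1) * ε) * q^(l+1) ≤ 1 * q^(l+1) := by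
              apply mul_le_mul_of_nonneg_right _ (by positivity)
              exact Real.exp_le_one_iff.2 (by nlinarith [pow_pos (show (0:ℝ)<4 by norm_num) (l+1)])
          _ = q^l * q := by ring
      have h2 : ∑ l ∈ Finset.range m, q^l * q = (q^m - 1)/(q-1) * q := by
        rw [← Finset.sum_mul, geom_sum_eq (ne_of_gt hq1)]
      have h3 : (q^m - 1)/(q-1) * q ≤ q/(q-1) * e := by
        rw [div_mul_eq_mul_div, div_le_iff₀ hq']
        have heq : q/(q-1) * e * (q-1) = q * e := by field_simp
        rw [heq]
        have h4 : q^m * q ≤ e * q := mul_le_mul_of_nonneg_right hqm hq0.le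
        calc (q^m - 1)*q = q^m * q - q := by ring
          _ ≤ e*q - q := by linarith
          _ ≤ e*q := by linarith
          _ = q*e := by ring
      linarith
    have htail : ∑' k, f (k + m) ≤ q*K * e := by
      have hb : ∀ k : ℕ, f (k + m) ≤ Kf k * (q * e) := by
        intro k
        rw [hf, hKf]
        have e1 : Real.exp (-(4:ℝ)^(k+m+1) * ε) ≤ Real.exp (-(4:ℝ)^k * 1) := by
          apply Real.exp_le_exp.2
          have h0 : (4:ℝ)^(k+m+1) * ε = (4:ℝ)^k * ((4:ℝ)^(m+1) * ε) := by ring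
          have h4k : (0:ℝ) ≤ (4:ℝ)^k := by positivity
          have : (4:ℝ)^k * 1 ≤ (4:ℝ)^(k+m+1) * ε := by
            rw [h0]
            exact mul_le_mul_of_nonneg_left hm2.le h4k
          linarith
        have e2 : q^(k+m+1) ≤ q^k * (q * e) := by
          have h0 : q^(k+m+1) = q^m * (q^k * q) := by ring
          rw [h0]
          calc q^m * (q^k * q) ≤ e * (q^k * q) := by
                apply mul_le_mul_of_nonneg_right hqm (by positivity)
            _ = q^k * (q * e) := by ring
        calc Real.exp (-(4:ℝ)^(k+m+1) * ε) * q^(k+m+1)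
            ≤ Real.exp (-(4:ℝ)^k * 1) * (q^k * (q * e)) := by
              exact mul_le_mul e1 e2 (by positivity) (Real.exp_pos _).le
          _ = Real.exp (-(4:ℝ)^k * 1) * q^k * (q * e) := by ring
      calc ∑' k, f (k + m) ≤ ∑' k, Kf k * (q * e) := by
            apply Summable.tsum_le_tsum hb ((summable_nat_add_iff m).2 hsum) (hKsum.mul_right _)
        _ = K * (q * e) := by rw [tsum_mul_right, ← hK]
        _ = q * K * e := by ring
    calc ∑ l ∈ Finset.range m, f l + ∑' k, f (k + m)
        ≤ q/(q-1) * e + q*K * e := add_le_add hhead htail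
      _ ≤ C * e := by
          rw [hC]
          have h5 : 0 ≤ Real.exp 4 * e := by positivity
          calc q/(q-1)*e + q*K*e ≤ q/(q-1)*e + q*K*e + Real.exp 4 * e := by linarith
            _ = (q/(q-1)+q*K+Real.exp 4)*e := by ring

lemma nat_le_four_pow (k : ℕ) : (k:ℝ) ≤ (4:ℝ)^k := by
  have h1 : k < 2^k := Nat.lt_two_pow_self
  have h2 : (2:ℕ)^k ≤ 4^k := Nat.pow_le_pow_left (by norm_num) k
  have : (k:ℝ) ≤ ((4:ℕ)^k : ℕ) := by exact_mod_cast (h1.le.trans h2)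
  simpa [Nat.cast_pow] using this

set_option maxHeartbeats 1000000 in
lemma case_zero :
    ∃ C : ℝ, 1 < C ∧ ∀ ε : ℝ, 0 < ε → ε ≤ 1 →
      C⁻¹ * Real.log (ε⁻¹ + 1) ≤ gFun 0 ε ∧ gFun 0 ε ≤ C * Real.log (ε⁻¹ + 1) := by
  refine ⟨200, by norm_num, ?_⟩
  intro ε hε hε1
  have hinv1 : (1:ℝ) ≤ ε⁻¹ := (one_le_inv_iff₀).2 ⟨hε, hε1⟩
  have hinv0 : (0:ℝ) < ε⁻¹ := by positivity
  -- numeric facts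
  have hlog2l : (0.6931:ℝ) < Real.log 2 := by
    have := Real.log_two_gt_d9; linarith
  have hlog2u : Real.log 2 < 0.6932 := by
    have := Real.log_two_lt_d9; linarith
  have hlog4 : Real.log 4 = 2 * Real.log 2 := by
    rw [show (4:ℝ) = 2^2 by norm_num, Real.log_pow]; push_cast; ring
  have hexp4 : Real.exp 4 ≤ 55 := by
    have he1 : Real.exp 1 < 2.7182818286 := Real.exp_one_lt_d9
    have h : Real.exp 4 = (Real.exp 1)^4 := by
      rw [← Real.exp_nat_mul]; norm_num
    rw [h]
    calc (Real.exp 1)^4 ≤ (2.7182818286:ℝ)^4 :=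
          pow_le_pow_left₀ (Real.exp_pos 1).le he1.le 4
      _ ≤ 55 := by norm_num
  have hexpm4 : (55:ℝ)⁻¹ ≤ Real.exp (-4) := by
    rw [Real.exp_neg]
    exact inv_anti₀ (Real.exp_pos 4) hexp4
  have hexpm1 : (3:ℝ)⁻¹ ≤ Real.exp (-1) := by
    rw [Real.exp_neg]
    apply inv_anti₀ (Real.exp_pos 1)
    have := Real.exp_one_lt_d9; linarith
  have hexpm1u : Real.exp (-1) ≤ 1/2 := by
    rw [Real.exp_neg]
    have h2 : (2:ℝ) ≤ Real.exp 1 := by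
      have := Real.add_one_le_exp (1:ℝ); linarith
    calc (Real.exp 1)⁻¹ ≤ (2:ℝ)⁻¹ := inv_anti₀ (by norm_num) h2
      _ = 1/2 := by norm_num
  -- the series
  have hgf : gFun 0 ε = ∑' l : ℕ, Real.exp (-(4:ℝ)^(l+1) * ε) := by
    rw [gFun_eq]
    congr 1; funext l
    rw [Real.rpow_zero, one_pow, mul_one]
  have hsum : Summable (fun l : ℕ => Real.exp (-(4:ℝ)^(l+1) * ε)) := by
    have := summable_aux' ε 1 hε (by norm_num)
    simpa using this
  obtain ⟨m, hm1, hm2, hm3, hm4, _, _⟩ := m_facts ε hε hε1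
  set L := Real.log ε⁻¹ with hLdef
  set ℓ := Real.log (ε⁻¹ + 1) with hldef
  have hL0 : 0 ≤ L := Real.log_nonneg hinv1
  have hl2 : Real.log 2 ≤ ℓ := Real.log_le_log (by norm_num) (by linarith)
  have hLl : L ≤ ℓ := Real.log_le_log hinv0 (by linarith)
  have hlu : ℓ ≤ Real.log 2 + L := by
    calc ℓ ≤ Real.log (2 * ε⁻¹) := Real.log_le_log (by linarith) (by linarith)
      _ = Real.log 2 + L := Real.log_mul (by norm_num) (ne_of_gt hinv0)
  rw [hgf]
  constructor
  · -- lower bound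
    have hlow1 : Real.exp (-4) ≤ ∑' l : ℕ, Real.exp (-(4:ℝ)^(l+1) * ε) := by
      have h0 := Summable.le_tsum hsum 0 (fun j _ => (Real.exp_pos _).le)
      have : Real.exp (-4) ≤ Real.exp (-(4:ℝ)^(0+1) * ε) := by
        apply Real.exp_le_exp.2; norm_num; nlinarith
      linarith
    have hlow2 : (m:ℝ) * Real.exp (-1) ≤ ∑' l : ℕ, Real.exp (-(4:ℝ)^(l+1) * ε) := by
      have hsumlb : ∀ l ∈ Finset.range m, Real.exp (-1) ≤ Real.exp (-(4:ℝ)^(l+1) * ε) := by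
        intro l hl
        rw [Finset.mem_range] at hl
        apply Real.exp_le_exp.2
        have hpow : (4:ℝ)^(l+1) ≤ (4:ℝ)^m := pow_le_pow_right₀ (by norm_num) hl
        have : (4:ℝ)^(l+1) * ε ≤ 1 := by
          calc (4:ℝ)^(l+1) * ε ≤ (4:ℝ)^m * ε := mul_le_mul_of_nonneg_right hpow hε.le
            _ ≤ 1 := hm1
        linarith
      calc (m:ℝ) * Real.exp (-1) = ∑ _l ∈ Finset.range m, Real.exp (-1) := by
            rw [Finset.sum_const, Finset.card_range, nsmul_eq_mul]
        _ ≤ ∑ l ∈ Finset.range m, Real.exp (-(4:ℝ)^(l+1) * ε) := Finset.sum_le_sum hsumlb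
        _ ≤ ∑' l : ℕ, Real.exp (-(4:ℝ)^(l+1) * ε) :=
            Summable.sum_le_tsum _ (fun j _ => (Real.exp_pos _).le) hsum
    -- combine
    have hg1 : (55:ℝ)⁻¹ ≤ ∑' l : ℕ, Real.exp (-(4:ℝ)^(l+1) * ε) := le_trans hexpm4 hlow1
    have hg2 : (m:ℝ) * (3:ℝ)⁻¹ ≤ ∑' l : ℕ, Real.exp (-(4:ℝ)^(l+1) * ε) := by
      have : (m:ℝ) * (3:ℝ)⁻¹ ≤ (m:ℝ) * Real.exp (-1) :=
        mul_le_mul_of_nonneg_left hexpm1 (Nat.cast_nonneg m)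
      linarith
    have hlbound : ℓ ≤ 0.6932 + ((m:ℝ)+1) * 1.387 := by
      have hlog4u : Real.log 4 ≤ 1.387 := by rw [hlog4]; linarith
      have h1 : ((m:ℝ)+1) * Real.log 4 ≤ ((m:ℝ)+1) * 1.387 :=
        mul_le_mul_of_nonneg_left hlog4u (by positivity)
      linarith
    rw [show (200:ℝ)⁻¹ * ℓ = ℓ / 200 by ring, div_le_iff₀ (by norm_num : (0:ℝ) < 200)]
    linarith
  · -- upper bound
    have hsplit := Summable.sum_add_tsum_nat_add (m+1) hsum
    rw [← hsplit]
    have hhead : ∑ l ∈ Finset.range (m+1), Real.exp (-(4:ℝ)^(l+1) * ε) ≤ (m:ℝ) + 1 := by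
      calc ∑ l ∈ Finset.range (m+1), Real.exp (-(4:ℝ)^(l+1) * ε)
          ≤ ∑ _l ∈ Finset.range (m+1), (1:ℝ) := by
            apply Finset.sum_le_sum
            intro l _
            apply Real.exp_le_one_iff.2
            nlinarith [pow_pos (show (0:ℝ) < 4 by norm_num) (l+1)]
        _ = (m:ℝ) + 1 := by rw [Finset.sum_const, Finset.card_range, nsmul_eq_mul]; push_cast; ring
    have htail : ∑' k : ℕ, Real.exp (-(4:ℝ)^(k+(m+1)+1) * ε) ≤ 2 := by
      have hb : ∀ k : ℕ, Real.exp (-(4:ℝ)^(k+(m+1)+1) * ε) ≤ (Real.exp (-1))^k := by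
        intro k
        have hrk : (Real.exp (-1))^k = Real.exp ((k:ℝ) * (-1)) :=
          (Real.exp_nat_mul (-1) k).symm
        rw [hrk]
        apply Real.exp_le_exp.2
        have h1 : (k:ℝ) ≤ (4:ℝ)^k := nat_le_four_pow k
        have h2 : (4:ℝ)^(k+(m+1)+1) * ε = (4:ℝ)^(k+1) * ((4:ℝ)^(m+1) * ε) := by ring
        have h3 : (4:ℝ)^k ≤ (4:ℝ)^(k+(m+1)+1) * ε := by
          rw [h2]
          have h4k : (0:ℝ) < (4:ℝ)^(k+1) := by positivity
          have h5 : (4:ℝ)^k ≤ (4:ℝ)^(k+1) := pow_le_pow_right₀ (by norm_num) (by omega)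
          calc (4:ℝ)^k ≤ (4:ℝ)^(k+1) := h5
            _ = (4:ℝ)^(k+1) * 1 := by ring
            _ ≤ (4:ℝ)^(k+1) * ((4:ℝ)^(m+1) * ε) := mul_le_mul_of_nonneg_left hm2.le h4k.le
        linarith
      have hgeo : Summable (fun k : ℕ => (Real.exp (-1))^k) :=
        summable_geometric_of_lt_one (Real.exp_pos _).le (by linarith)
      calc ∑' k : ℕ, Real.exp (-(4:ℝ)^(k+(m+1)+1) * ε)
          ≤ ∑' k : ℕ, (Real.exp (-1))^k := by
            apply Summable.tsum_le_tsum hb _ hgeo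
            exact (summable_nat_add_iff (m+1)).2 hsum
        _ = (1 - Real.exp (-1))⁻¹ := tsum_geometric_of_lt_one (Real.exp_pos _).le (by linarith)
        _ ≤ 2 := by
            calc (1 - Real.exp (-1))⁻¹ ≤ ((1:ℝ)/2)⁻¹ := inv_anti₀ (by norm_num) (by linarith)
              _ = 2 := by norm_num
    have hm_le : (m:ℝ) ≤ ℓ := by
      have h1 : (m:ℝ) * 1 ≤ (m:ℝ) * Real.log 4 := by
        apply mul_le_mul_of_nonneg_left _ (Nat.cast_nonneg m)
        rw [hlog4]; linarith
      linarith
    calc ∑ l ∈ Finset.range (m+1), Real.exp (-(4:ℝ)^(l+1) * ε)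
          + ∑' k : ℕ, Real.exp (-(4:ℝ)^(k+(m+1)+1) * ε)
        ≤ ((m:ℝ) + 1) + 2 := add_le_add hhead htail
      _ ≤ 200 * ℓ := by linarith

theorem gFun_asymptotics (η : ℝ) :
    ∃ C : ℝ, 1 < C ∧ ∀ ε : ℝ, 0 < ε → ε ≤ 1 →
      (η < 0 → C⁻¹ ≤ gFun η ε ∧ gFun η ε ≤ C) ∧
      (η = 0 → C⁻¹ * Real.log (ε⁻¹ + 1) ≤ gFun η ε ∧ gFun η ε ≤ C * Real.log (ε⁻¹ + 1)) ∧
      (0 < η → C⁻¹ * ε ^ (-η / 2) ≤ gFun η ε ∧ gFun η ε ≤ C * ε ^ (-η / 2)) := by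
  rcases lt_trichotomy η 0 with hη | rfl | hη
  · obtain ⟨C, hC, h⟩ := case_neg η hη
    exact ⟨C, hC, fun ε hε hε1 => ⟨fun _ => h ε hε hε1,
      fun h0 => absurd h0 (ne_of_lt hη), fun h0 => absurd (h0.trans hη) (lt_irrefl 0)⟩⟩
  · obtain ⟨C, hC, h⟩ := case_zero
    exact ⟨C, hC, fun ε hε hε1 => ⟨fun h0 => absurd h0 (lt_irrefl 0),
      fun _ => h ε hε hε1, fun h0 => absurd h0 (lt_irrefl 0)⟩⟩
  · obtain ⟨C, hC, h⟩ := case_pos η hη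
    exact ⟨C, hC, fun ε hε hε1 => ⟨fun h0 => absurd (hη.trans h0) (lt_irrefl 0),
      fun h0 => absurd h0 (ne_of_gt hη), fun _ => h ε hε hε1⟩⟩
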